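/- Let p, q, p', q' be points in the plane with ||p-q|| + ||p'-q'|| ≥ ||p-q'|| + ||p'-q||. Then the disks with diameters pq and p'q' have a common point. -/

import Mathlib

lemma balls_intersect_aux {E : Type*} [NormedAddCommGroup E] [NormedSpace ℝ E]
    (c c' : E) (r r' : ℝ) (hr : 0 ≤ r) (hr' : 0 ≤ r')
    (h : ‖c - c'‖ ≤ r + r') : ∃ x : E, ‖x - c‖ ≤ r ∧ ‖x - c'‖ ≤ r' := by
  set d := ‖c - c'‖ with hd
  by_cases hdr : d ≤ r
  · exact ⟨c', by simpa [norm_sub_rev] using hdr, by simpa using hr'⟩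
  · push_neg at hdr
    have hd0 : 0 < d := lt_of_le_of_lt hr hdr
    refine ⟨c + (r / d) • (c' - c), ?_, ?_⟩
    · rw [add_sub_cancel_left, norm_smul, norm_sub_rev c' c] at *
      rw [Real.norm_eq_abs, abs_of_nonneg (by positivity)]
      rw [div_mul_eq_mul_div, mul_div_assoc, div_self (ne_of_gt hd0), mul_one]
    · have hx : c + (r / d) • (c' - c) - c' = (r / d - 1) • (c' - c) := by
        rw [sub_smul, one_smul]
        abel
      rw [hx, norm_smul, norm_sub_rev c' c, Real.norm_eq_abs]
      have h1 : r / d - 1 ≤ 0 := by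
        rw [sub_nonpos, div_le_one hd0]; exact le_of_lt hdr
      rw [abs_of_nonpos h1]
      have : -(r / d - 1) * d = d - r := by field_simp; ring
      rw [this]
      linarith

theorem disks_intersect_of_maxsum_pair
    (p q p' q' : EuclideanSpace ℝ (Fin 2))
    (h : ‖p - q'‖ + ‖p' - q‖ ≤ ‖p - q‖ + ‖p' - q'‖) :
    ∃ x : EuclideanSpace ℝ (Fin 2),
      ‖x - (1/2 : ℝ) • (p + q)‖ ≤ ‖p - q‖ / 2 ∧
      ‖x - (1/2 : ℝ) • (p' + q')‖ ≤ ‖p' - q'‖ / 2 := by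
  apply balls_intersect_aux _ _ _ _ (by positivity) (by positivity)
  have hc : (1/2 : ℝ) • (p + q) - (1/2 : ℝ) • (p' + q')
      = (1/2 : ℝ) • ((p - q') + (q - p')) := by
    module
  rw [hc, norm_smul, Real.norm_eq_abs]
  have htri : ‖(p - q') + (q - p')‖ ≤ ‖p - q'‖ + ‖q - p'‖ := norm_add_le _ _
  rw [norm_sub_rev q p'] at htri
  rw [abs_of_nonneg (by norm_num : (0:ℝ) ≤ 1/2)]
  linarith
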